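/- The function V₅ is stable on ℤ/5ℤ: for every ρ : ZMod 5 → ℝ with ρ n ≥ 0 for all n, the double sum ∑_{m,n ∈ ZMod 5} ρ m * V₅ (m - n) * ρ n is ≥ 0. -/

import Mathlib

open Finset

/-- The potential `V₅` on `ZMod 5`: `V₅ 0 = V₅ 2 = V₅ 3 = 1`, `V₅ 1 = V₅ 4 = -1`. -/
def V₅ : ZMod 5 → ℝ := fun n => if n = 1 ∨ n = 4 then -1 else 1

theorem V₅_isStable :
    ∀ ρ : ZMod 5 → ℝ, (∀ n, 0 ≤ ρ n) →
      0 ≤ ∑ m : ZMod 5, ∑ n : ZMod 5, ρ m * V₅ (m - n) * ρ n := by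
  intro ρ h
  have e : ∑ m : ZMod 5, ∑ n : ZMod 5, ρ m * V₅ (m - n) * ρ n =
      (ρ 0 + ρ 1 + ρ 2 + ρ 3 + ρ 4)^2 -
      4*(ρ 0 * ρ 1 + ρ 1 * ρ 2 + ρ 2 * ρ 3 + ρ 3 * ρ 4 + ρ 4 * ρ 0) := by
    show ∑ m : Fin 5, ∑ n : Fin 5, _ = _
    simp (config := { decide := true }) [Fin.sum_univ_five, V₅]
    ring_nf
    rfl
  rw [e]
  have h0 := h 0; have h1 := h 1; have h2 := h 2; have h3 := h 3; have h4 := h 4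
  nlinarith [sq_nonneg (ρ 0 - ρ 1 + ρ 2 - ρ 3 + ρ 4), sq_nonneg (ρ 0 + ρ 1 - ρ 2 + ρ 3 - ρ 4),
    sq_nonneg (ρ 0 - ρ 1 + ρ 2 + ρ 3 - ρ 4), sq_nonneg (-ρ 0 + ρ 1 - ρ 2 + ρ 3 + ρ 4),
    sq_nonneg (ρ 0 + ρ 1 - ρ 2 - ρ 3 + ρ 4),
    mul_nonneg h0 h2, mul_nonneg h1 h3, mul_nonneg h2 h4, mul_nonneg h3 h0, mul_nonneg h4 h1]
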